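/- Let m ≥ 2, let σ be the canonical surface measure on the unit sphere S = {P ∈ EuclideanSpace ℝ m : ‖P‖ = 1}, let R₁ > 0, define a : (0,∞) → ℝ by a(r) = ∫_{R₁}^{r} t^{1−m} dt, and define F(X) = ∫_{P ∈ S} a(‖P − X‖)² dσ(P) for X in the open unit ball. Then for every X with ‖X‖ + R₁ < 1 one has F(0) ≤ F(X), and equality holds if and only if X = 0. -/

import Mathlib

open MeasureTheory Metric intervalIntegral
open scoped RealInnerProductSpace ENNReal Pointwise

namespace Stmt6

noncomputable section

variable {m : ℕ}

/-- The sphere measure. -/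
def σm (m : ℕ) : Measure (sphere (0 : EuclideanSpace ℝ (Fin m)) 1) :=
  (volume : Measure (EuclideanSpace ℝ (Fin m))).toSphere

instance : IsFiniteMeasure (σm m) := by unfold σm; infer_instance

instance : IsFiniteMeasureOnCompacts (σm m) :=
  ⟨fun K _ => lt_of_le_of_lt (measure_mono (Set.subset_univ K)) (measure_lt_top _ _)⟩

lemma norm_sub_pos_sphere (P : sphere (0 : EuclideanSpace ℝ (Fin m)) 1) {c : EuclideanSpace ℝ (Fin m)}
    (hc : ‖c‖ < 1) : 1 - ‖c‖ ≤ ‖(P : EuclideanSpace ℝ (Fin m)) - c‖ := by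
  have hP : ‖(P : EuclideanSpace ℝ (Fin m))‖ = 1 := by
    simpa [mem_sphere_zero_iff_norm] using P.2
  calc 1 - ‖c‖ = ‖(P : EuclideanSpace ℝ (Fin m))‖ - ‖c‖ := by rw [hP]
    _ ≤ ‖(P : EuclideanSpace ℝ (Fin m)) - c‖ := norm_sub_norm_le _ _

section A

variable {R₁ : ℝ} (hR₁ : 0 < R₁) {a : ℝ → ℝ}
  (ha : ∀ r : ℝ, a r = ∫ t in R₁..r, t ^ (1 - (m : ℤ)))

lemma contOn_zpow_pos {s : Set ℝ} (hs : ∀ x ∈ s, x ≠ 0) :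
    ContinuousOn (fun t : ℝ => t ^ (1 - (m : ℤ))) s := fun x hx =>
  (continuousAt_zpow₀ x _ (Or.inl (hs x hx))).continuousWithinAt

lemma intInt_zpow {c d : ℝ} (hc : 0 < c) (hd : 0 < d) :
    IntervalIntegrable (fun t : ℝ => t ^ (1 - (m : ℤ))) volume c d := by
  apply ContinuousOn.intervalIntegrable
  apply contOn_zpow_pos
  intro x hx
  have h1 : min c d ≤ x := hx.1
  exact ne_of_gt (lt_of_lt_of_le (lt_min hc hd) h1)

include hR₁ ha

lemma a_hasDerivAt {r : ℝ} (hr : 0 < r) : HasDerivAt a (r ^ (1 - (m : ℤ))) r := by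
  have hfun : a = fun r => ∫ t in R₁..r, t ^ (1 - (m : ℤ)) := funext ha
  rw [hfun]
  apply intervalIntegral.integral_hasDerivAt_right (intInt_zpow hR₁ hr)
  · exact ⟨Set.Ioi 0, Ioi_mem_nhds hr,
      ((contOn_zpow_pos (fun x hx => ne_of_gt hx)).aestronglyMeasurable measurableSet_Ioi)⟩
  · exact continuousAt_zpow₀ r _ (Or.inl (ne_of_gt hr))

lemma a_continuousAt {r : ℝ} (hr : 0 < r) : ContinuousAt a r :=
  (a_hasDerivAt hR₁ ha hr).continuousAt

lemma a_lt {u : ℝ} (hu : 1 < u) : a 1 < a u := by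
  have h1 : IntervalIntegrable (fun t : ℝ => t ^ (1 - (m : ℤ))) volume R₁ 1 :=
    intInt_zpow hR₁ one_pos
  have h2 : IntervalIntegrable (fun t : ℝ => t ^ (1 - (m : ℤ))) volume 1 u :=
    intInt_zpow one_pos (by linarith)
  have hadd := intervalIntegral.integral_add_adjacent_intervals h1 h2
  have hpos : 0 < ∫ t in (1:ℝ)..u, t ^ (1 - (m : ℤ)) := by
    apply intervalIntegral.intervalIntegral_pos_of_pos_on h2 _ hu
    intro x hx
    exact zpow_pos (by linarith [hx.1]) _
  rw [ha 1, ha u, ← hadd]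
  linarith

end A

section Isom

/-- Isometry acting on the unit sphere. -/
def eS (e : EuclideanSpace ℝ (Fin m) ≃ₗᵢ[ℝ] EuclideanSpace ℝ (Fin m)) :
    sphere (0 : EuclideanSpace ℝ (Fin m)) 1 → sphere (0 : EuclideanSpace ℝ (Fin m)) 1 :=
  fun P => ⟨e P, by
    have hP : ‖(P : EuclideanSpace ℝ (Fin m))‖ = 1 := by
      simpa [mem_sphere_zero_iff_norm] using P.2
    simp [mem_sphere_zero_iff_norm, hP]⟩

lemma continuous_eS (e : EuclideanSpace ℝ (Fin m) ≃ₗᵢ[ℝ] EuclideanSpace ℝ (Fin m)) :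
    Continuous (eS e) :=
  Continuous.subtype_mk (e.continuous.comp continuous_subtype_val) _

lemma vol_preimage (e : EuclideanSpace ℝ (Fin m) ≃ₗᵢ[ℝ] EuclideanSpace ℝ (Fin m))
    (B : Set (EuclideanSpace ℝ (Fin m))) :
    (volume : Measure (EuclideanSpace ℝ (Fin m))) (⇑e ⁻¹' B) = volume B := by
  have h1 := (e.toHomeomorph.toMeasurableEquiv).map_apply (μ := volume) B
  have h2 : Measure.map (⇑e.toHomeomorph.toMeasurableEquiv) volume = volume := by
    have h3 : ⇑e.toHomeomorph.toMeasurableEquiv = ⇑e := rfl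
    rw [h3]
    exact e.measurePreserving.map_eq
  rw [h2] at h1
  exact h1.symm

lemma map_eS (e : EuclideanSpace ℝ (Fin m) ≃ₗᵢ[ℝ] EuclideanSpace ℝ (Fin m)) :
    (σm m).map (eS e) = σm m := by
  ext s hs
  rw [Measure.map_apply (continuous_eS e).measurable hs]
  have hs' : MeasurableSet (eS e ⁻¹' s) := (continuous_eS e).measurable hs
  unfold σm
  rw [Measure.toSphere_apply' _ hs', Measure.toSphere_apply' _ hs]
  congr 1
  have himg : (Subtype.val '' (eS e ⁻¹' s)) = ⇑(e.symm) '' (Subtype.val '' s) := by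
    ext x
    constructor
    · rintro ⟨P, hPs, rfl⟩
      exact ⟨↑(eS e P), ⟨eS e P, hPs, rfl⟩, by simp [eS]⟩
    · rintro ⟨y, ⟨Q, hQ, rfl⟩, rfl⟩
      have hQn : ‖(Q : EuclideanSpace ℝ (Fin m))‖ = 1 := by
        simpa [mem_sphere_zero_iff_norm] using Q.2
      refine ⟨⟨e.symm ↑Q, by simp [mem_sphere_zero_iff_norm, hQn]⟩, ?_, rfl⟩
      have : eS e ⟨e.symm ↑Q, by simp [mem_sphere_zero_iff_norm, hQn]⟩ = Q := by
        apply Subtype.ext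
        simp [eS]
      simpa [Set.mem_preimage, this] using hQ
  rw [himg]
  have hsm : (Set.Ioo (0:ℝ) 1) • (⇑(e.symm) '' (Subtype.val '' s))
      = ⇑(e.symm) '' ((Set.Ioo (0:ℝ) 1) • (Subtype.val '' s)) := by
    ext z
    constructor
    · rintro ⟨c, hc, w, ⟨w', hw', rfl⟩, rfl⟩
      exact ⟨c • w', ⟨c, hc, w', hw', rfl⟩, by simp⟩
    · rintro ⟨w, ⟨c, hc, w', hw', rfl⟩, rfl⟩
      exact ⟨c, hc, e.symm w', ⟨w', hw', rfl⟩, by simp⟩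
  rw [hsm]
  have hpre : ⇑(e.symm) '' ((Set.Ioo (0:ℝ) 1) • (Subtype.val '' s))
      = ⇑e ⁻¹' ((Set.Ioo (0:ℝ) 1) • (Subtype.val '' s)) := by
    ext z
    simp only [Set.mem_image, Set.mem_preimage]
    constructor
    · rintro ⟨y, hy, rfl⟩; simpa using hy
    · intro hz; exact ⟨e z, hz, by simp⟩
  rw [hpre, vol_preimage]

lemma integral_eS (e : EuclideanSpace ℝ (Fin m) ≃ₗᵢ[ℝ] EuclideanSpace ℝ (Fin m))
    (f : sphere (0 : EuclideanSpace ℝ (Fin m)) 1 → ℝ) (hf : AEStronglyMeasurable f (σm m)) :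
    ∫ P, f (eS e P) ∂(σm m) = ∫ P, f P ∂(σm m) := by
  conv_rhs => rw [← map_eS e]
  exact (integral_map (continuous_eS e).aemeasurable
    (by rw [map_eS e]; exact hf)).symm

lemma sigma_pos_of_isOpen (hm : 1 ≤ m) {U : Set (sphere (0 : EuclideanSpace ℝ (Fin m)) 1)}
    (hU : IsOpen U) (hne : U.Nonempty) : 0 < σm m U := by
  obtain ⟨P₀, hP₀⟩ := hne
  obtain ⟨ε, hε, hball⟩ := Metric.isOpen_iff.1 hU P₀ hP₀
  set x₀ : EuclideanSpace ℝ (Fin m) := ↑P₀ with hx₀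
  have hx₀n : ‖x₀‖ = 1 := by
    rw [hx₀]; simpa [mem_sphere_zero_iff_norm] using P₀.2
  unfold σm
  rw [Measure.toSphere_apply' _ hU.measurableSet]
  set V : Set (EuclideanSpace ℝ (Fin m)) :=
    ({(0 : EuclideanSpace ℝ (Fin m))}ᶜ ∩ Metric.ball 0 1) ∩
      ((fun y : EuclideanSpace ℝ (Fin m) => ‖y‖⁻¹ • y) ⁻¹' Metric.ball x₀ ε) with hV
  have hWopen : IsOpen (({(0 : EuclideanSpace ℝ (Fin m))}ᶜ ∩ Metric.ball 0 1)) :=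
    isOpen_compl_singleton.inter Metric.isOpen_ball
  have hg : ContinuousOn (fun y : EuclideanSpace ℝ (Fin m) => ‖y‖⁻¹ • y)
      (({(0 : EuclideanSpace ℝ (Fin m))}ᶜ ∩ Metric.ball 0 1)) := by
    refine ContinuousOn.smul (f := fun y : EuclideanSpace ℝ (Fin m) => ‖y‖⁻¹) (g := fun y => y) ?_ continuousOn_id
    exact (continuous_norm.continuousOn).inv₀ fun y hy =>
      norm_ne_zero_iff.2 (by simpa using hy.1)
  have hVopen : IsOpen V := hg.isOpen_inter_preimage hWopen Metric.isOpen_ball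
  have hVne : V.Nonempty := by
    refine ⟨(2:ℝ)⁻¹ • x₀, ⟨⟨?_, ?_⟩, ?_⟩⟩
    · simp only [Set.mem_compl_iff, Set.mem_singleton_iff]
      intro h
      rcases smul_eq_zero.mp h with h' | h'
      · norm_num at h'
      · rw [h'] at hx₀n; simp at hx₀n
    · simp only [Metric.mem_ball, dist_zero_right, norm_smul, hx₀n]
      norm_num
    · have : ‖(2:ℝ)⁻¹ • x₀‖ = 2⁻¹ := by
        simp [norm_smul, hx₀n]
      simp only [Set.mem_preimage, this]
      rw [smul_smul]
      norm_num
      simpa using hε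
  have hVsub : V ⊆ (Set.Ioo (0:ℝ) 1) • (Subtype.val '' U) := by
    rintro y ⟨⟨hy0, hy1⟩, hyb⟩
    have hyn : 0 < ‖y‖ := norm_pos_iff.2 (by simpa using hy0)
    have hyn1 : ‖y‖ < 1 := by simpa [dist_zero_right] using hy1
    set Q : EuclideanSpace ℝ (Fin m) := ‖y‖⁻¹ • y with hQ
    have hQn : ‖Q‖ = 1 := by
      rw [hQ, norm_smul]
      simp [abs_of_pos (inv_pos.2 hyn), inv_mul_cancel₀ (ne_of_gt hyn)]
    have hQU : Q ∈ Subtype.val '' U := by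
      refine ⟨⟨Q, by simp [mem_sphere_zero_iff_norm, hQn]⟩, ?_, rfl⟩
      apply hball
      simp only [Metric.mem_ball]
      have : dist (⟨Q, by simp [mem_sphere_zero_iff_norm, hQn]⟩ :
          sphere (0 : EuclideanSpace ℝ (Fin m)) 1) P₀ = dist Q x₀ := Subtype.dist_eq _ _
      rw [this]
      simpa [Metric.mem_ball] using hyb
    exact ⟨‖y‖, ⟨hyn, hyn1⟩, Q, hQU, by
      show ‖y‖ • Q = y
      rw [hQ, smul_smul, mul_inv_cancel₀ (ne_of_gt hyn), one_smul]⟩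
  have hvol : 0 < (volume : Measure (EuclideanSpace ℝ (Fin m)))
      ((Set.Ioo (0:ℝ) 1) • (Subtype.val '' U)) :=
    lt_of_lt_of_le (hVopen.measure_pos volume hVne) (measure_mono hVsub)
  have hdim : (Module.finrank ℝ (EuclideanSpace ℝ (Fin m)) : ℝ≥0∞) ≠ 0 := by
    rw [finrank_euclideanSpace_fin]
    exact_mod_cast Nat.one_le_iff_ne_zero.1 hm
  exact ENNReal.mul_pos hdim (ne_of_gt hvol)

end Isom

section H

variable {R₁ : ℝ} (hR₁ : 0 < R₁) {a : ℝ → ℝ}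
  (ha : ∀ r : ℝ, a r = ∫ t in R₁..r, t ^ (1 - (m : ℤ)))

/-- The spherical mean of `a ∘ dist`. -/
def Hf (a : ℝ → ℝ) (m : ℕ) (Z : EuclideanSpace ℝ (Fin m)) : ℝ :=
  ∫ P : sphere (0 : EuclideanSpace ℝ (Fin m)) 1, a ‖(P : EuclideanSpace ℝ (Fin m)) - Z‖ ∂(σm m)

include hR₁ ha

lemma cont_integrand {c : EuclideanSpace ℝ (Fin m)} (hc : ‖c‖ < 1) :
    Continuous fun P : sphere (0 : EuclideanSpace ℝ (Fin m)) 1 =>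
      a ‖(P : EuclideanSpace ℝ (Fin m)) - c‖ := by
  rw [continuous_iff_continuousAt]
  intro P
  have h1 : ContinuousAt (fun P : sphere (0 : EuclideanSpace ℝ (Fin m)) 1 =>
      ‖(P : EuclideanSpace ℝ (Fin m)) - c‖) P :=
    ((continuous_subtype_val.sub continuous_const).norm).continuousAt
  have h2 : (0:ℝ) < ‖(P : EuclideanSpace ℝ (Fin m)) - c‖ :=
    lt_of_lt_of_le (by linarith) (norm_sub_pos_sphere P hc)
  exact ContinuousAt.comp (x := P) (a_continuousAt hR₁ ha h2) h1

omit hR₁ ha in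
lemma integrable_of_continuous (f : sphere (0 : EuclideanSpace ℝ (Fin m)) 1 → ℝ)
    (hf : Continuous f) : Integrable f (σm m) :=
  hf.integrable_of_hasCompactSupport
    (IsCompact.of_isClosed_subset isCompact_univ (isClosed_tsupport _) (Set.subset_univ _))

lemma integrable_integrand {c : EuclideanSpace ℝ (Fin m)} (hc : ‖c‖ < 1) :
    Integrable (fun P : sphere (0 : EuclideanSpace ℝ (Fin m)) 1 =>
      a ‖(P : EuclideanSpace ℝ (Fin m)) - c‖) (σm m) :=
  integrable_of_continuous _ (cont_integrand hR₁ ha hc)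

lemma H_radial (Z : EuclideanSpace ℝ (Fin m)) (hZ : ‖Z‖ < 1) (v : EuclideanSpace ℝ (Fin m))
    (hv : ‖v‖ = 1) : Hf a m Z = Hf a m (‖Z‖ • v) := by
  set W : EuclideanSpace ℝ (Fin m) := ‖Z‖ • v with hW
  have hWn : ‖W‖ = ‖Z‖ := by
    rw [hW, norm_smul, hv, mul_one, Real.norm_eq_abs, abs_of_nonneg (norm_nonneg _)]
  set e := Submodule.reflection (ℝ ∙ (W - Z))ᗮ with he
  have heWZ : e W = Z := Submodule.reflection_sub (by rw [hWn])
  have hf : AEStronglyMeasurable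
      (fun P : sphere (0 : EuclideanSpace ℝ (Fin m)) 1 =>
        a ‖(P : EuclideanSpace ℝ (Fin m)) - Z‖) (σm m) :=
    (cont_integrand hR₁ ha hZ).aestronglyMeasurable
  have key := integral_eS e (fun P => a ‖(P : EuclideanSpace ℝ (Fin m)) - Z‖) hf
  have hLHS : ∀ P : sphere (0 : EuclideanSpace ℝ (Fin m)) 1,
      a ‖((eS e P : sphere (0 : EuclideanSpace ℝ (Fin m)) 1) :
        EuclideanSpace ℝ (Fin m)) - Z‖ = a ‖(P : EuclideanSpace ℝ (Fin m)) - W‖ := by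
    intro P
    congr 1
    have : ((eS e P : sphere (0 : EuclideanSpace ℝ (Fin m)) 1) :
        EuclideanSpace ℝ (Fin m)) = e ↑P := rfl
    rw [this, ← heWZ, ← map_sub e, e.norm_map]
  unfold Hf
  rw [← key]
  exact integral_congr_ae (Filter.Eventually.of_forall fun P => hLHS P)

end H

section D

variable (m : ℕ)

/-- first radial derivative kernel -/
def d1 (P c v : EuclideanSpace ℝ (Fin m)) : ℝ :=
  ⟪c - P, v⟫ * ‖P - c‖ ^ (-(m : ℤ))

/-- second radial derivative kernel -/
def d2 (P c v : EuclideanSpace ℝ (Fin m)) : ℝ :=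
  ‖P - c‖ ^ (-(m : ℤ)) - m * ⟪c - P, v⟫ ^ 2 * ‖P - c‖ ^ (-(m : ℤ) - 2)

end D

section PW

variable {R₁ : ℝ} (hR₁ : 0 < R₁) {a : ℝ → ℝ}
  (ha : ∀ r : ℝ, a r = ∫ t in R₁..r, t ^ (1 - (m : ℤ)))

include hR₁ ha in
lemma had12 {P Y₀ v : EuclideanSpace ℝ (Fin m)} (hv : ‖v‖ = 1) {s : ℝ}
    (hu : P - (Y₀ + s • v) ≠ 0) :
    HasDerivAt (fun s' => a ‖P - (Y₀ + s' • v)‖) (d1 m P (Y₀ + s • v) v) s ∧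
    HasDerivAt (fun s' => d1 m P (Y₀ + s' • v) v) (d2 m P (Y₀ + s • v) v) s := by
  set ip : ℝ := ⟪P - Y₀, v⟫ with hipdef
  set qf : ℝ → ℝ := fun s' => ‖P - Y₀‖ ^ 2 - 2 * ip * s' + s' ^ 2 with hqfdef
  have hqf : ∀ s' : ℝ, ‖P - (Y₀ + s' • v)‖ ^ 2 = qf s' := by
    intro s'
    have h1 : P - (Y₀ + s' • v) = (P - Y₀) - s' • v := by abel
    rw [h1, norm_sub_sq_real, real_inner_smul_right, norm_smul, hv]
    simp only [hqfdef, Real.norm_eq_abs, mul_one]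
    rw [sq_abs]
    ring
  have hnorm : ∀ s' : ℝ, ‖P - (Y₀ + s' • v)‖ = Real.sqrt (qf s') := by
    intro s'
    rw [← hqf s', Real.sqrt_sq (norm_nonneg _)]
  have hip : ∀ s' : ℝ, ⟪(Y₀ + s' • v) - P, v⟫ = s' - ip := by
    intro s'
    have h1 : (Y₀ + s' • v) - P = s' • v - (P - Y₀) := by abel
    rw [h1, inner_sub_left, real_inner_smul_left, real_inner_self_eq_norm_sq, hv]
    simp [hipdef]
  set u : ℝ := ‖P - (Y₀ + s • v)‖ with hudef
  have hu0 : 0 < u := norm_pos_iff.2 hu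
  have hq0 : 0 < qf s := by rw [← hqf]; positivity
  have husq : Real.sqrt (qf s) = u := (hnorm s).symm
  have hsu0 : Real.sqrt (qf s) ≠ 0 := by rw [husq]; exact ne_of_gt hu0
  have hqd : HasDerivAt qf (2 * s - 2 * ip) s := by
    have h1 : HasDerivAt (fun s' : ℝ => s' ^ 2) (2 * s) s := by
      simpa using hasDerivAt_pow 2 s
    have h2 : HasDerivAt (fun s' : ℝ => ‖P - Y₀‖ ^ 2 - 2 * ip * s') (-(2 * ip)) s := by
      simpa using (HasDerivAt.const_sub (‖P - Y₀‖ ^ 2) ((hasDerivAt_id s).const_mul (2 * ip)))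
    have := h2.add h1
    exact this.congr_deriv (by ring)
  have hsq : HasDerivAt (fun s' => Real.sqrt (qf s')) ((1 / (2 * u)) * (2 * s - 2 * ip)) s := by
    have := (Real.hasDerivAt_sqrt (ne_of_gt hq0)).comp s hqd
    simpa [husq, Function.comp_def] using this
  constructor
  · have ha' : HasDerivAt a (u ^ (1 - (m : ℤ))) u := a_hasDerivAt hR₁ ha hu0
    have hcomp : HasDerivAt (fun s' => a (Real.sqrt (qf s')))
        (u ^ (1 - (m : ℤ)) * ((1 / (2 * u)) * (2 * s - 2 * ip))) s := by
      have h := (husq ▸ ha' : HasDerivAt a (u ^ (1 - (m : ℤ))) (Real.sqrt (qf s))).comp s hsq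
      exact h
    have hfun : (fun s' => a ‖P - (Y₀ + s' • v)‖) = fun s' => a (Real.sqrt (qf s')) := by
      funext s'; rw [hnorm s']
    rw [hfun]
    convert hcomp using 1
    show d1 m P (Y₀ + s • v) v = _
    unfold d1
    rw [hip s, ← hudef]
    have hsplit : u ^ (1 - (m : ℤ)) = u ^ (-(m : ℤ)) * u := by
      rw [sub_eq_neg_add, zpow_add₀ (ne_of_gt hu0), zpow_one]
    rw [hsplit]
    field_simp
  · have hfun : (fun s' => d1 m P (Y₀ + s' • v) v)
        = fun s' => (s' - ip) * (Real.sqrt (qf s')) ^ (-(m : ℤ)) := by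
      funext s'
      unfold d1
      rw [hip s', hnorm s']
    rw [hfun]
    have h1 : HasDerivAt (fun s' : ℝ => s' - ip) 1 s := (hasDerivAt_id s).sub_const ip
    have h2 : HasDerivAt (fun s' => (Real.sqrt (qf s')) ^ (-(m : ℤ)))
        ((-(m : ℝ) * (Real.sqrt (qf s)) ^ (-(m : ℤ) - 1)) * ((1 / (2 * u)) * (2 * s - 2 * ip)))
        s := by
      have h := (hasDerivAt_zpow (-(m : ℤ)) _ (Or.inl hsu0)).comp s hsq
      simpa [Function.comp_def, Int.cast_neg, Int.cast_natCast] using h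
    have hprod : HasDerivAt (fun s' => (s' - ip) * (Real.sqrt (qf s')) ^ (-(m : ℤ))) _ s := h1.mul h2
    convert hprod using 1
    show d2 m P (Y₀ + s • v) v = _
    unfold d2
    rw [hip s, ← hudef, husq]
    have hsplit : u ^ (-(m : ℤ) - 1) = u ^ (-(m : ℤ) - 2) * u := by
      rw [show (-(m : ℤ) - 1) = (-(m : ℤ) - 2) + 1 by ring, zpow_add₀ (ne_of_gt hu0), zpow_one]
    rw [hsplit]
    field_simp
    ring

end PW

section Param

lemma zpow_anti_neg {x y : ℝ} (hx : 0 < x) (hxy : x ≤ y) {k : ℤ} (hk : k ≤ 0) :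
    y ^ k ≤ x ^ k := by
  set n : ℕ := (-k).toNat with hn
  have hkn : k = -(n : ℤ) := by omega
  have hy : 0 < y := lt_of_lt_of_le hx hxy
  rw [hkn, zpow_neg, zpow_neg, zpow_natCast, zpow_natCast]
  exact inv_anti₀ (pow_pos hx n) (pow_le_pow_left₀ (le_of_lt hx) hxy n)

lemma d1_bound (hm : 1 ≤ m) {P c v : EuclideanSpace ℝ (Fin m)} (hP : ‖P‖ = 1) {δ : ℝ} (hδ : 0 < δ)
    (hc : ‖c‖ ≤ 1 - δ) (hv : ‖v‖ = 1) : |d1 m P c v| ≤ δ ^ (1 - (m : ℤ)) := by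
  have hu : δ ≤ ‖P - c‖ := by
    calc δ = 1 - (1 - δ) := by ring
    _ ≤ ‖P‖ - ‖c‖ := by rw [hP]; linarith
    _ ≤ ‖P - c‖ := norm_sub_norm_le _ _
  have hu0 : 0 < ‖P - c‖ := lt_of_lt_of_le hδ hu
  have h1 : |⟪c - P, v⟫| ≤ ‖P - c‖ := by
    calc |⟪c - P, v⟫| ≤ ‖c - P‖ * ‖v‖ := abs_real_inner_le_norm _ _
    _ = ‖P - c‖ := by rw [hv, mul_one, norm_sub_rev]
  have h2 : (0:ℝ) < ‖P - c‖ ^ (-(m:ℤ)) := zpow_pos hu0 _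
  calc |d1 m P c v| = |⟪c - P, v⟫| * ‖P - c‖ ^ (-(m:ℤ)) := by
        rw [d1, abs_mul, abs_of_pos h2]
    _ ≤ ‖P - c‖ * ‖P - c‖ ^ (-(m:ℤ)) := by
        apply mul_le_mul_of_nonneg_right h1 (le_of_lt h2)
    _ = ‖P - c‖ ^ (1 - (m:ℤ)) := by
        rw [show (1 - (m:ℤ)) = 1 + -(m:ℤ) by ring, zpow_add₀ (ne_of_gt hu0), zpow_one]
    _ ≤ δ ^ (1 - (m:ℤ)) := zpow_anti_neg hδ hu (by omega)

lemma d2_bound (hm : 1 ≤ m) {P c v : EuclideanSpace ℝ (Fin m)} (hP : ‖P‖ = 1) {δ : ℝ}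
    (hδ : 0 < δ) (hc : ‖c‖ ≤ 1 - δ) (hv : ‖v‖ = 1) :
    |d2 m P c v| ≤ (1 + m) * δ ^ (-(m : ℤ)) := by
  have hu : δ ≤ ‖P - c‖ := by
    calc δ = 1 - (1 - δ) := by ring
    _ ≤ ‖P‖ - ‖c‖ := by rw [hP]; linarith
    _ ≤ ‖P - c‖ := norm_sub_norm_le _ _
  have hu0 : 0 < ‖P - c‖ := lt_of_lt_of_le hδ hu
  have h2 : (0:ℝ) < ‖P - c‖ ^ (-(m:ℤ)) := zpow_pos hu0 _
  have h3 : (0:ℝ) < ‖P - c‖ ^ (-(m:ℤ) - 2) := zpow_pos hu0 _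
  have h1 : ⟪c - P, v⟫ ^ 2 ≤ ‖P - c‖ ^ 2 := by
    rw [← sq_abs (⟪c - P, v⟫)]
    apply pow_le_pow_left₀ (abs_nonneg _)
    calc |⟪c - P, v⟫| ≤ ‖c - P‖ * ‖v‖ := abs_real_inner_le_norm _ _
    _ = ‖P - c‖ := by rw [hv, mul_one, norm_sub_rev]
  have hkey : (m:ℝ) * ⟪c - P, v⟫ ^ 2 * ‖P - c‖ ^ (-(m:ℤ) - 2)
      ≤ (m:ℝ) * ‖P - c‖ ^ (-(m:ℤ)) := by
    have : (m:ℝ) * ⟪c - P, v⟫ ^ 2 * ‖P - c‖ ^ (-(m:ℤ) - 2)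
        ≤ (m:ℝ) * ‖P - c‖ ^ 2 * ‖P - c‖ ^ (-(m:ℤ) - 2) := by
      apply mul_le_mul_of_nonneg_right _ (le_of_lt h3)
      exact mul_le_mul_of_nonneg_left h1 (Nat.cast_nonneg m)
    calc (m:ℝ) * ⟪c - P, v⟫ ^ 2 * ‖P - c‖ ^ (-(m:ℤ) - 2)
        ≤ (m:ℝ) * ‖P - c‖ ^ 2 * ‖P - c‖ ^ (-(m:ℤ) - 2) := this
      _ = (m:ℝ) * ‖P - c‖ ^ (-(m:ℤ)) := by
          rw [mul_assoc, ← zpow_natCast ‖P - c‖ 2, ← zpow_add₀ (ne_of_gt hu0)]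
          norm_num
  have habs : |d2 m P c v| ≤ ‖P - c‖ ^ (-(m:ℤ)) + (m:ℝ) * ‖P - c‖ ^ (-(m:ℤ)) := by
    rw [d2]
    refine (abs_sub _ _).trans ?_
    apply add_le_add
    · rw [abs_of_pos h2]
    · rw [abs_mul, abs_of_pos h3, abs_mul]
      simp only [Nat.abs_cast, abs_pow, sq_abs]
      exact hkey
  calc |d2 m P c v| ≤ (1 + m) * ‖P - c‖ ^ (-(m:ℤ)) := by rw [add_mul, one_mul]; exact habs
    _ ≤ (1 + m) * δ ^ (-(m:ℤ)) := by
        apply mul_le_mul_of_nonneg_left (zpow_anti_neg hδ hu (by omega)) (by positivity)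

variable {R₁ : ℝ} (hR₁ : 0 < R₁) {a : ℝ → ℝ}
  (ha : ∀ r : ℝ, a r = ∫ t in R₁..r, t ^ (1 - (m : ℤ)))

lemma cont_d1 {c : EuclideanSpace ℝ (Fin m)} (hc : ‖c‖ < 1) (v : EuclideanSpace ℝ (Fin m)) :
    Continuous fun P : sphere (0 : EuclideanSpace ℝ (Fin m)) 1 =>
      d1 m (P : EuclideanSpace ℝ (Fin m)) c v := by
  unfold d1
  apply Continuous.mul
  · exact (continuous_const.sub continuous_subtype_val).inner continuous_const
  · rw [continuous_iff_continuousAt]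
    intro P
    have h1 : ContinuousAt (fun P : sphere (0 : EuclideanSpace ℝ (Fin m)) 1 =>
        ‖(P : EuclideanSpace ℝ (Fin m)) - c‖) P :=
      ((continuous_subtype_val.sub continuous_const).norm).continuousAt
    have h2 : ‖(P : EuclideanSpace ℝ (Fin m)) - c‖ ≠ 0 :=
      ne_of_gt (lt_of_lt_of_le (by linarith) (norm_sub_pos_sphere P hc))
    exact ContinuousAt.comp (x := P) (continuousAt_zpow₀ _ _ (Or.inl h2)) h1

lemma cont_d2 {c : EuclideanSpace ℝ (Fin m)} (hc : ‖c‖ < 1) (v : EuclideanSpace ℝ (Fin m)) :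
    Continuous fun P : sphere (0 : EuclideanSpace ℝ (Fin m)) 1 =>
      d2 m (P : EuclideanSpace ℝ (Fin m)) c v := by
  unfold d2
  have hnc : ∀ k : ℤ, Continuous fun P : sphere (0 : EuclideanSpace ℝ (Fin m)) 1 =>
      ‖(P : EuclideanSpace ℝ (Fin m)) - c‖ ^ k := by
    intro k
    rw [continuous_iff_continuousAt]
    intro P
    have h1 : ContinuousAt (fun P : sphere (0 : EuclideanSpace ℝ (Fin m)) 1 =>
        ‖(P : EuclideanSpace ℝ (Fin m)) - c‖) P :=
      ((continuous_subtype_val.sub continuous_const).norm).continuousAt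
    have h2 : ‖(P : EuclideanSpace ℝ (Fin m)) - c‖ ≠ 0 :=
      ne_of_gt (lt_of_lt_of_le (by linarith) (norm_sub_pos_sphere P hc))
    exact ContinuousAt.comp (x := P) (continuousAt_zpow₀ _ _ (Or.inl h2)) h1
  apply Continuous.sub (hnc _)
  apply Continuous.mul
  · apply Continuous.mul continuous_const
    exact (((continuous_const.sub continuous_subtype_val).inner continuous_const).pow 2)
  · exact hnc _

include hR₁ ha

lemma L1 (hm : 1 ≤ m) (Y₀ v : EuclideanSpace ℝ (Fin m)) (hv : ‖v‖ = 1) (s₀ : ℝ)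
    (h : ‖Y₀ + s₀ • v‖ < 1) :
    HasDerivAt (fun s => Hf a m (Y₀ + s • v))
      (∫ P : sphere (0 : EuclideanSpace ℝ (Fin m)) 1,
        d1 m (P : EuclideanSpace ℝ (Fin m)) (Y₀ + s₀ • v) v ∂(σm m)) s₀ := by
  set ε : ℝ := (1 - ‖Y₀ + s₀ • v‖) / 2 with hε
  have hε0 : 0 < ε := by rw [hε]; linarith
  have hcs : ∀ s ∈ Metric.ball s₀ ε, ‖Y₀ + s • v‖ ≤ 1 - ε := by
    intro s hs
    have h1 : Y₀ + s • v = (Y₀ + s₀ • v) + (s - s₀) • v := by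
      rw [sub_smul]; abel
    rw [h1]
    calc ‖(Y₀ + s₀ • v) + (s - s₀) • v‖ ≤ ‖Y₀ + s₀ • v‖ + ‖(s - s₀) • v‖ := norm_add_le _ _
      _ ≤ ‖Y₀ + s₀ • v‖ + ε := by
          rw [norm_smul, hv, mul_one, Real.norm_eq_abs]
          have := Metric.mem_ball.1 hs
          rw [Real.dist_eq] at this
          linarith [le_of_lt this]
      _ ≤ 1 - ε := by rw [hε]; linarith
  have hne : ∀ s ∈ Metric.ball s₀ ε, ∀ P : sphere (0 : EuclideanSpace ℝ (Fin m)) 1,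
      (P : EuclideanSpace ℝ (Fin m)) - (Y₀ + s • v) ≠ 0 := by
    intro s hs P
    have h1 := norm_sub_pos_sphere P (lt_of_le_of_lt (hcs s hs) (by linarith))
    intro hzero
    rw [hzero, norm_zero] at h1
    have := hcs s hs
    linarith
  have c1 : ∀ᶠ s in nhds s₀, AEStronglyMeasurable
      (fun P : sphere (0 : EuclideanSpace ℝ (Fin m)) 1 =>
        a ‖(P : EuclideanSpace ℝ (Fin m)) - (Y₀ + s • v)‖) (σm m) := by
    filter_upwards [Metric.ball_mem_nhds s₀ hε0] with s hs
    exact (cont_integrand hR₁ ha (lt_of_le_of_lt (hcs s hs) (by linarith))).aestronglyMeasurable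
  have c2 := integrable_integrand hR₁ ha (c := Y₀ + s₀ • v) h
  have c3 : AEStronglyMeasurable (fun P : sphere (0 : EuclideanSpace ℝ (Fin m)) 1 =>
      d1 m (P : EuclideanSpace ℝ (Fin m)) (Y₀ + s₀ • v) v) (σm m) :=
    (cont_d1 (lt_of_le_of_lt (hcs s₀ (Metric.mem_ball_self hε0)) (by linarith))
      v).aestronglyMeasurable
  have c4 : ∀ᵐ P : sphere (0 : EuclideanSpace ℝ (Fin m)) 1 ∂(σm m), ∀ s ∈ Metric.ball s₀ ε,
      ‖d1 m (P : EuclideanSpace ℝ (Fin m)) (Y₀ + s • v) v‖ ≤ ε ^ (1 - (m : ℤ)) := by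
    apply Filter.Eventually.of_forall
    intro P s hs
    have hP : ‖(P : EuclideanSpace ℝ (Fin m))‖ = 1 := by
      simpa [mem_sphere_zero_iff_norm] using P.2
    rw [Real.norm_eq_abs]
    exact d1_bound hm hP hε0 (hcs s hs) hv
  have c5 : Integrable (fun _ : sphere (0 : EuclideanSpace ℝ (Fin m)) 1 =>
      ε ^ (1 - (m : ℤ))) (σm m) := integrable_const _
  have c6 : ∀ᵐ P : sphere (0 : EuclideanSpace ℝ (Fin m)) 1 ∂(σm m), ∀ s ∈ Metric.ball s₀ ε,
      HasDerivAt (fun s' => a ‖(P : EuclideanSpace ℝ (Fin m)) - (Y₀ + s' • v)‖)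
        (d1 m (P : EuclideanSpace ℝ (Fin m)) (Y₀ + s • v) v) s := by
    apply Filter.Eventually.of_forall
    intro P s hs
    exact (had12 hR₁ ha hv (hne s hs P)).1
  exact (hasDerivAt_integral_of_dominated_loc_of_deriv_le (Metric.ball_mem_nhds s₀ hε0) c1 c2 c3 c4 c5 c6).2

lemma L2 (hm : 1 ≤ m) (Y₀ v : EuclideanSpace ℝ (Fin m)) (hv : ‖v‖ = 1) (s₀ : ℝ)
    (h : ‖Y₀ + s₀ • v‖ < 1) :
    HasDerivAt (fun s => ∫ P : sphere (0 : EuclideanSpace ℝ (Fin m)) 1,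
        d1 m (P : EuclideanSpace ℝ (Fin m)) (Y₀ + s • v) v ∂(σm m))
      (∫ P : sphere (0 : EuclideanSpace ℝ (Fin m)) 1,
        d2 m (P : EuclideanSpace ℝ (Fin m)) (Y₀ + s₀ • v) v ∂(σm m)) s₀ := by
  set ε : ℝ := (1 - ‖Y₀ + s₀ • v‖) / 2 with hε
  have hε0 : 0 < ε := by rw [hε]; linarith
  have hcs : ∀ s ∈ Metric.ball s₀ ε, ‖Y₀ + s • v‖ ≤ 1 - ε := by
    intro s hs
    have h1 : Y₀ + s • v = (Y₀ + s₀ • v) + (s - s₀) • v := by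
      rw [sub_smul]; abel
    rw [h1]
    calc ‖(Y₀ + s₀ • v) + (s - s₀) • v‖ ≤ ‖Y₀ + s₀ • v‖ + ‖(s - s₀) • v‖ := norm_add_le _ _
      _ ≤ ‖Y₀ + s₀ • v‖ + ε := by
          rw [norm_smul, hv, mul_one, Real.norm_eq_abs]
          have := Metric.mem_ball.1 hs
          rw [Real.dist_eq] at this
          linarith [le_of_lt this]
      _ ≤ 1 - ε := by rw [hε]; linarith
  have hne : ∀ s ∈ Metric.ball s₀ ε, ∀ P : sphere (0 : EuclideanSpace ℝ (Fin m)) 1,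
      (P : EuclideanSpace ℝ (Fin m)) - (Y₀ + s • v) ≠ 0 := by
    intro s hs P
    have h1 := norm_sub_pos_sphere P (lt_of_le_of_lt (hcs s hs) (by linarith))
    intro hzero
    rw [hzero, norm_zero] at h1
    have := hcs s hs
    linarith
  have c1 : ∀ᶠ s in nhds s₀, AEStronglyMeasurable
      (fun P : sphere (0 : EuclideanSpace ℝ (Fin m)) 1 =>
        d1 m (P : EuclideanSpace ℝ (Fin m)) (Y₀ + s • v) v) (σm m) := by
    filter_upwards [Metric.ball_mem_nhds s₀ hε0] with s hs
    exact (cont_d1 (lt_of_le_of_lt (hcs s hs) (by linarith)) v).aestronglyMeasurable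
  have c2 : Integrable (fun P : sphere (0 : EuclideanSpace ℝ (Fin m)) 1 =>
      d1 m (P : EuclideanSpace ℝ (Fin m)) (Y₀ + s₀ • v) v) (σm m) :=
    integrable_of_continuous _
      (cont_d1 (lt_of_le_of_lt (hcs s₀ (Metric.mem_ball_self hε0)) (by linarith)) v)
  have c3 : AEStronglyMeasurable (fun P : sphere (0 : EuclideanSpace ℝ (Fin m)) 1 =>
      d2 m (P : EuclideanSpace ℝ (Fin m)) (Y₀ + s₀ • v) v) (σm m) :=
    (cont_d2 (lt_of_le_of_lt (hcs s₀ (Metric.mem_ball_self hε0)) (by linarith))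
      v).aestronglyMeasurable
  have c4 : ∀ᵐ P : sphere (0 : EuclideanSpace ℝ (Fin m)) 1 ∂(σm m), ∀ s ∈ Metric.ball s₀ ε,
      ‖d2 m (P : EuclideanSpace ℝ (Fin m)) (Y₀ + s • v) v‖ ≤ (1 + m) * ε ^ (-(m : ℤ)) := by
    apply Filter.Eventually.of_forall
    intro P s hs
    have hP : ‖(P : EuclideanSpace ℝ (Fin m))‖ = 1 := by
      simpa [mem_sphere_zero_iff_norm] using P.2
    rw [Real.norm_eq_abs]
    exact d2_bound (by omega) hP hε0 (hcs s hs) hv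
  have c5 : Integrable (fun _ : sphere (0 : EuclideanSpace ℝ (Fin m)) 1 =>
      (1 + (m:ℝ)) * ε ^ (-(m : ℤ))) (σm m) := integrable_const _
  have c6 : ∀ᵐ P : sphere (0 : EuclideanSpace ℝ (Fin m)) 1 ∂(σm m), ∀ s ∈ Metric.ball s₀ ε,
      HasDerivAt (fun s' => d1 m (P : EuclideanSpace ℝ (Fin m)) (Y₀ + s' • v) v)
        (d2 m (P : EuclideanSpace ℝ (Fin m)) (Y₀ + s • v) v) s := by
    apply Filter.Eventually.of_forall
    intro P s hs
    exact (had12 hR₁ ha hv (hne s hs P)).2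
  exact (hasDerivAt_integral_of_dominated_loc_of_deriv_le (Metric.ball_mem_nhds s₀ hε0) c1 c2 c3 c4 c5 c6).2

end Param


section Core

variable {R₁ : ℝ} (hR₁ : 0 < R₁) {a : ℝ → ℝ}
  (ha : ∀ r : ℝ, a r = ∫ t in R₁..r, t ^ (1 - (m : ℤ)))

/-- The function `φ′(t)`: integral of `d1` at radius `t`. -/
def phiD (m : ℕ) (i₀ : Fin m) (t : ℝ) : ℝ :=
  ∫ P : sphere (0 : EuclideanSpace ℝ (Fin m)) 1,
    d1 m (P : EuclideanSpace ℝ (Fin m)) (t • EuclideanSpace.single i₀ (1:ℝ))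
      (EuclideanSpace.single i₀ (1:ℝ)) ∂(σm m)

lemma norm_single_one (i₀ : Fin m) : ‖EuclideanSpace.single i₀ (1:ℝ)‖ = 1 := by
  rw [EuclideanSpace.norm_single]; norm_num

lemma norm_t_single (i₀ : Fin m) (t : ℝ) : ‖t • EuclideanSpace.single i₀ (1:ℝ)‖ = |t| := by
  rw [norm_smul, norm_single_one, mul_one, Real.norm_eq_abs]

include hR₁ ha in
lemma phi_deriv (hm : 1 ≤ m) (i₀ : Fin m) {t : ℝ} (ht : |t| < 1) :
    HasDerivAt (fun t' => Hf a m (t' • EuclideanSpace.single i₀ (1:ℝ))) (phiD m i₀ t) t := by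
  have h := L1 hR₁ ha hm 0 (EuclideanSpace.single i₀ (1:ℝ)) (norm_single_one i₀) t
    (by rw [zero_add, norm_t_single]; exact ht)
  simpa [zero_add, phiD] using h

include hR₁ ha in
lemma phiD_deriv (hm : 1 ≤ m) (i₀ : Fin m) {t : ℝ} (ht : |t| < 1) :
    HasDerivAt (phiD m i₀)
      (∫ P : sphere (0 : EuclideanSpace ℝ (Fin m)) 1,
        d2 m (P : EuclideanSpace ℝ (Fin m)) (t • EuclideanSpace.single i₀ (1:ℝ))
          (EuclideanSpace.single i₀ (1:ℝ)) ∂(σm m)) t := by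
  have h := L2 hR₁ ha hm 0 (EuclideanSpace.single i₀ (1:ℝ)) (norm_single_one i₀) t
    (by rw [zero_add, norm_t_single]; exact ht)
  simp only [zero_add] at h
  exact h

lemma sum_d2 {P c : EuclideanSpace ℝ (Fin m)} (hne : P - c ≠ 0) :
    ∑ i : Fin m, d2 m P c (EuclideanSpace.single i (1:ℝ)) = 0 := by
  have hu0 : (0:ℝ) < ‖P - c‖ := norm_pos_iff.2 hne
  have hinner : ∀ i : Fin m, ⟪c - P, EuclideanSpace.single i (1:ℝ)⟫ = (c - P) i := by
    intro i
    rw [real_inner_comm, EuclideanSpace.inner_single_left]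
    simp
  have hsum : ∑ i : Fin m, ((c - P) i) ^ 2 = ‖P - c‖ ^ 2 := by
    have h1 : ∀ i : Fin m, ((c - P) i) ^ 2 = ((P - c) i) ^ 2 := by
      intro i
      have h2 : (c - P) i = -((P - c) i) := by
        have : c - P = -(P - c) := by abel
        rw [this]; rfl
      rw [h2]; ring
    simp_rw [h1]
    rw [EuclideanSpace.norm_eq, Real.sq_sqrt (by positivity)]
    simp [Real.norm_eq_abs, sq_abs]
  have hrw : ∀ i : Fin m, d2 m P c (EuclideanSpace.single i (1:ℝ))
      = ‖P - c‖ ^ (-(m:ℤ)) - (m:ℝ) * ‖P - c‖ ^ (-(m:ℤ) - 2) * ((c - P) i) ^ 2 := by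
    intro i
    rw [d2, hinner i]; ring
  simp_rw [hrw]
  rw [Finset.sum_sub_distrib, Finset.sum_const, ← Finset.mul_sum, hsum, Finset.card_univ,
    Fintype.card_fin, nsmul_eq_mul]
  rw [mul_assoc, ← zpow_natCast ‖P - c‖ 2, ← zpow_add₀ (ne_of_gt hu0)]
  norm_num

include hR₁ ha in
lemma tangent_eq (hm : 2 ≤ m) (i₀ : Fin m) {t : ℝ} (ht0 : 0 < t) (ht1 : t < 1)
    {i : Fin m} (hi : i ≠ i₀) :
    ∫ P : sphere (0 : EuclideanSpace ℝ (Fin m)) 1,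
      d2 m (P : EuclideanSpace ℝ (Fin m)) (t • EuclideanSpace.single i₀ (1:ℝ))
        (EuclideanSpace.single i (1:ℝ)) ∂(σm m) = phiD m i₀ t / t := by
  set v₁ : EuclideanSpace ℝ (Fin m) := EuclideanSpace.single i₀ (1:ℝ) with hv₁def
  set v : EuclideanSpace ℝ (Fin m) := EuclideanSpace.single i (1:ℝ) with hvdef
  have hv₁ : ‖v₁‖ = 1 := norm_single_one i₀
  have hv : ‖v‖ = 1 := norm_single_one i
  have hiorth : ⟪v₁, v⟫ = 0 := by
    rw [hv₁def, hvdef, EuclideanSpace.inner_single_left]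
    simp [EuclideanSpace.single_apply, Ne.symm hi]
  have hnorm : ∀ s : ℝ, ‖t • v₁ + s • v‖ = Real.sqrt (t ^ 2 + s ^ 2) := by
    intro s
    have h2 : ‖t • v₁ + s • v‖ ^ 2 = t ^ 2 + s ^ 2 := by
      rw [norm_add_sq_real, real_inner_smul_left, real_inner_smul_right, hiorth,
        norm_smul, norm_smul, hv₁, hv]
      simp [Real.norm_eq_abs, sq_abs]
    rw [← h2, Real.sqrt_sq (norm_nonneg _)]
  set ρ : ℝ → ℝ := fun s => Real.sqrt (t ^ 2 + s ^ 2) with hρdef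
  have hρpos : ∀ s, 0 < ρ s := fun s => Real.sqrt_pos.2 (by positivity)
  have hρ0 : ρ 0 = t := by
    rw [hρdef]
    simp [Real.sqrt_sq ht0.le]
  have hρd : ∀ s, HasDerivAt ρ (s / ρ s) s := by
    intro s
    have hq : HasDerivAt (fun s' : ℝ => t ^ 2 + s' ^ 2) (2 * s) s := by
      simpa using (hasDerivAt_pow 2 s).const_add (t ^ 2)
    have h := (Real.hasDerivAt_sqrt (by positivity)).comp s hq
    refine h.congr_deriv ?_
    rw [hρdef]
    field_simp
  set δ : ℝ := 1 - t with hδdef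
  have hδ0 : 0 < δ := by rw [hδdef]; linarith
  have hρlt : ∀ s : ℝ, |s| < δ → ρ s < 1 := by
    intro s hs
    have h2 : s ^ 2 < δ ^ 2 := by
      rw [← sq_abs s]
      exact pow_lt_pow_left₀ hs (abs_nonneg s) (by norm_num)
    have h1 : t ^ 2 + s ^ 2 < 1 := by
      rw [hδdef] at h2
      nlinarith
    calc ρ s < Real.sqrt 1 := (Real.sqrt_lt_sqrt_iff (by positivity)).2 h1
      _ = 1 := Real.sqrt_one
  have hHeq : ∀ s : ℝ, |s| < δ → Hf a m (t • v₁ + s • v) = Hf a m (ρ s • v₁) := by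
    intro s hs
    have h1 := H_radial hR₁ ha (t • v₁ + s • v) (by rw [hnorm]; exact hρlt s hs) v₁ hv₁
    rw [h1, hnorm]
  set k : ℝ → ℝ := fun s => ∫ P : sphere (0 : EuclideanSpace ℝ (Fin m)) 1,
    d1 m (P : EuclideanSpace ℝ (Fin m)) (t • v₁ + s • v) v ∂(σm m) with hkdef
  have hk : ∀ s : ℝ, |s| < δ → k s = phiD m i₀ (ρ s) * (s / ρ s) := by
    intro s hs
    have hL1 : HasDerivAt (fun s' => Hf a m (t • v₁ + s' • v)) (k s) s :=
      L1 hR₁ ha (by omega) (t • v₁) v hv s (by rw [hnorm]; exact hρlt s hs)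
    have hchain : HasDerivAt (fun s' => Hf a m (ρ s' • v₁))
        (phiD m i₀ (ρ s) * (s / ρ s)) s := by
      have hout := phi_deriv hR₁ ha (by omega) i₀ (t := ρ s)
        (by rw [abs_of_pos (hρpos s)]; exact hρlt s hs)
      exact hout.comp s (hρd s)
    have hev : (fun s' => Hf a m (t • v₁ + s' • v)) =ᶠ[nhds s]
        fun s' => Hf a m (ρ s' • v₁) := by
      have hmem : Set.Ioo (-δ) δ ∈ nhds s :=
        Ioo_mem_nhds (by linarith [(abs_lt.1 hs).1]) (by linarith [(abs_lt.1 hs).2])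
      filter_upwards [hmem] with s' hs'
      exact hHeq s' (abs_lt.2 ⟨hs'.1, hs'.2⟩)
    have hchain' : HasDerivAt (fun s' => Hf a m (t • v₁ + s' • v))
        (phiD m i₀ (ρ s) * (s / ρ s)) s := hchain.congr_of_eventuallyEq hev
    exact hL1.unique hchain'
  have hL2 : HasDerivAt k (∫ P : sphere (0 : EuclideanSpace ℝ (Fin m)) 1,
      d2 m (P : EuclideanSpace ℝ (Fin m)) (t • v₁ + (0:ℝ) • v) v ∂(σm m)) 0 :=
    L2 hR₁ ha (by omega) (t • v₁) v hv 0 (by rw [hnorm]; exact hρlt 0 (by rwa [abs_zero]))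
  have hg : HasDerivAt (fun s => phiD m i₀ (ρ s) * (s / ρ s)) (phiD m i₀ t / t) 0 := by
    have h1 : HasDerivAt (fun s => phiD m i₀ (ρ s)) 0 0 := by
      have hout := phiD_deriv hR₁ ha (by omega) i₀ (t := t)
        (by rw [abs_of_pos ht0]; exact ht1)
      have hout' : HasDerivAt (phiD m i₀)
          (∫ P : sphere (0 : EuclideanSpace ℝ (Fin m)) 1,
            d2 m (P : EuclideanSpace ℝ (Fin m)) (t • v₁) v₁ ∂(σm m)) (ρ 0) := by
        rw [hρ0]; exact hout
      have h := hout'.comp 0 (hρd 0)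
      simpa [Function.comp_def] using h
    have h2 : HasDerivAt (fun s => s / ρ s) (1 / t) 0 := by
      have hinv : HasDerivAt (fun s => (ρ s)⁻¹) (-(0 / ρ 0) / (ρ 0) ^ 2) 0 :=
        (hρd 0).inv (ne_of_gt (hρpos 0))
      have hid : HasDerivAt (fun s : ℝ => s) 1 0 := hasDerivAt_id 0
      have h := hid.mul hinv
      have hfun : (fun s => s / ρ s) = fun s => s * (ρ s)⁻¹ := by
        funext s'; rw [div_eq_mul_inv]
      rw [hfun]
      refine h.congr_deriv ?_
      rw [hρ0]
      field_simp
      simp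
    have h := h1.mul h2
    refine h.congr_deriv ?_
    rw [hρ0]
    field_simp
    simp
  have hev0 : k =ᶠ[nhds (0:ℝ)] fun s => phiD m i₀ (ρ s) * (s / ρ s) := by
    have hmem : Set.Ioo (-δ) δ ∈ nhds (0:ℝ) := Ioo_mem_nhds (by linarith) hδ0
    filter_upwards [hmem] with s hs
    exact hk s (abs_lt.2 ⟨hs.1, hs.2⟩)
  have hL2' : HasDerivAt (fun s => phiD m i₀ (ρ s) * (s / ρ s))
      (∫ P : sphere (0 : EuclideanSpace ℝ (Fin m)) 1,
        d2 m (P : EuclideanSpace ℝ (Fin m)) (t • v₁ + (0:ℝ) • v) v ∂(σm m)) 0 :=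
    hL2.congr_of_eventuallyEq hev0.symm
  have huniq := hL2'.unique hg
  have hz : t • v₁ + (0:ℝ) • v = t • v₁ := by simp
  rw [hz] at huniq
  exact huniq

include hR₁ ha in
lemma phiD_ode (hm : 2 ≤ m) (i₀ : Fin m) {t : ℝ} (ht0 : 0 < t) (ht1 : t < 1) :
    HasDerivAt (phiD m i₀) (-(((m:ℝ) - 1) * phiD m i₀ t / t)) t := by
  have hd := phiD_deriv hR₁ ha (by omega) i₀ (t := t) (by rw [abs_of_pos ht0]; exact ht1)
  have hval : (∫ P : sphere (0 : EuclideanSpace ℝ (Fin m)) 1,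
      d2 m (P : EuclideanSpace ℝ (Fin m)) (t • EuclideanSpace.single i₀ (1:ℝ))
        (EuclideanSpace.single i₀ (1:ℝ)) ∂(σm m)) = -(((m:ℝ) - 1) * phiD m i₀ t / t) := by
    have hct : ‖t • EuclideanSpace.single i₀ (1:ℝ)‖ < 1 := by
      rw [norm_t_single, abs_of_pos ht0]; exact ht1
    have hne : ∀ P : sphere (0 : EuclideanSpace ℝ (Fin m)) 1,
        (P : EuclideanSpace ℝ (Fin m)) - t • EuclideanSpace.single i₀ (1:ℝ) ≠ 0 := by
      intro P hzero
      have h1 := norm_sub_pos_sphere P hct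
      rw [hzero, norm_zero] at h1
      linarith
    have hsum0 : ∑ i : Fin m, (∫ P : sphere (0 : EuclideanSpace ℝ (Fin m)) 1,
        d2 m (P : EuclideanSpace ℝ (Fin m)) (t • EuclideanSpace.single i₀ (1:ℝ))
          (EuclideanSpace.single i (1:ℝ)) ∂(σm m)) = 0 := by
      rw [← MeasureTheory.integral_finset_sum]
      · have : ∀ P : sphere (0 : EuclideanSpace ℝ (Fin m)) 1,
            ∑ i : Fin m, d2 m (P : EuclideanSpace ℝ (Fin m))
              (t • EuclideanSpace.single i₀ (1:ℝ)) (EuclideanSpace.single i (1:ℝ)) = 0 :=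
          fun P => sum_d2 (hne P)
        rw [integral_congr_ae (Filter.Eventually.of_forall this)]
        simp
      · intro i _
        exact integrable_of_continuous _ (cont_d2 hct _)
    have htans : ∀ i ∈ Finset.univ.erase i₀,
        (∫ P : sphere (0 : EuclideanSpace ℝ (Fin m)) 1,
          d2 m (P : EuclideanSpace ℝ (Fin m)) (t • EuclideanSpace.single i₀ (1:ℝ))
            (EuclideanSpace.single i (1:ℝ)) ∂(σm m)) = phiD m i₀ t / t := by
      intro i hi
      exact tangent_eq hR₁ ha hm i₀ ht0 ht1 (Finset.ne_of_mem_erase hi)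
    have hsplit := Finset.sum_erase_add Finset.univ
      (fun i => ∫ P : sphere (0 : EuclideanSpace ℝ (Fin m)) 1,
        d2 m (P : EuclideanSpace ℝ (Fin m)) (t • EuclideanSpace.single i₀ (1:ℝ))
          (EuclideanSpace.single i (1:ℝ)) ∂(σm m)) (Finset.mem_univ i₀)
    rw [Finset.sum_congr rfl htans, Finset.sum_const, Finset.card_erase_of_mem
      (Finset.mem_univ i₀), Finset.card_univ, Fintype.card_fin, nsmul_eq_mul] at hsplit
    rw [hsum0] at hsplit
    have hmcast : ((m - 1 : ℕ) : ℝ) = (m : ℝ) - 1 := by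
      have : (1:ℕ) ≤ m := by omega
      push_cast [this]
      ring
    rw [hmcast] at hsplit
    beta_reduce at hsplit
    linear_combination hsplit
  rw [← hval]
  exact hd

lemma phiD_bound (hm : 1 ≤ m) (i₀ : Fin m) {t : ℝ} (ht : |t| ≤ 1 / 2) :
    |phiD m i₀ t| ≤ ((1:ℝ)/2) ^ (1 - (m:ℤ)) * ((σm m) Set.univ).toReal := by
  have hb : ∀ᵐ P : sphere (0 : EuclideanSpace ℝ (Fin m)) 1 ∂(σm m),
      ‖d1 m (P : EuclideanSpace ℝ (Fin m)) (t • EuclideanSpace.single i₀ (1:ℝ))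
        (EuclideanSpace.single i₀ (1:ℝ))‖ ≤ ((1:ℝ)/2) ^ (1 - (m:ℤ)) := by
    apply Filter.Eventually.of_forall
    intro P
    have hP : ‖(P : EuclideanSpace ℝ (Fin m))‖ = 1 := by
      simpa [mem_sphere_zero_iff_norm] using P.2
    rw [Real.norm_eq_abs]
    exact d1_bound hm hP (by norm_num) (by rw [norm_t_single]; linarith) (norm_single_one i₀)
  have h := norm_integral_le_of_norm_le_const (μ := σm m) hb
  rw [Real.norm_eq_abs] at h
  exact h

lemma phiD_zero_at_zero (i₀ : Fin m) : phiD m i₀ 0 = 0 := by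
  unfold phiD
  simp only [zero_smul]
  set f : sphere (0 : EuclideanSpace ℝ (Fin m)) 1 → ℝ :=
    fun P => d1 m (P : EuclideanSpace ℝ (Fin m)) 0 (EuclideanSpace.single i₀ (1:ℝ)) with hfdef
  have hcont : Continuous f := cont_d1 (by simp) _
  have h := integral_eS (LinearIsometryEquiv.neg ℝ) f hcont.aestronglyMeasurable
  have hneg : ∀ P : sphere (0 : EuclideanSpace ℝ (Fin m)) 1,
      f (eS (LinearIsometryEquiv.neg ℝ) P) = -f P := by
    intro P
    rw [hfdef]
    have hcoe : ((eS (LinearIsometryEquiv.neg ℝ) P : sphere (0 : EuclideanSpace ℝ (Fin m)) 1) :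
        EuclideanSpace ℝ (Fin m)) = -(P : EuclideanSpace ℝ (Fin m)) := rfl
    simp only [hcoe]
    rw [d1, d1]
    rw [zero_sub, zero_sub, neg_neg, inner_neg_left, sub_zero, sub_zero, norm_neg]
    ring
  have h2 : ∫ P, f (eS (LinearIsometryEquiv.neg ℝ) P) ∂(σm m) = -∫ P, f P ∂(σm m) := by
    rw [← MeasureTheory.integral_neg]
    exact integral_congr_ae (Filter.Eventually.of_forall hneg)
  rw [h2] at h
  linarith [h]

include hR₁ ha in
lemma phiD_eq_zero (hm : 2 ≤ m) (i₀ : Fin m) {t : ℝ} (ht0 : 0 < t) (ht1 : t < 1) :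
    phiD m i₀ t = 0 := by
  obtain ⟨n, rfl⟩ : ∃ n, m = n + 2 := ⟨m - 2, by omega⟩
  set w : ℝ → ℝ := fun r => r ^ (n + 1) * phiD (n + 2) i₀ r with hwdef
  have hw : ∀ r : ℝ, 0 < r → r < 1 → HasDerivAt w 0 r := by
    intro r hr0 hr1
    have h1 : HasDerivAt (fun r : ℝ => r ^ (n + 1)) ((n + 1 : ℕ) * r ^ n) r := by
      simpa using hasDerivAt_pow (n + 1) r
    have h2 := phiD_ode hR₁ ha (by omega) i₀ hr0 hr1
    have h := h1.mul h2
    refine (h.congr_deriv ?_)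
    symm
    have hcast : ((n + 2 : ℕ) : ℝ) - 1 = (n + 1 : ℕ) := by push_cast; ring
    rw [hcast]
    field_simp
    ring
  have hconst : ∀ r : ℝ, 0 < r → r ≤ t → w t = w r := by
    intro r hr0 hrt
    rcases eq_or_lt_of_le hrt with h | hrt'
    · rw [h]
    have hdiff : DifferentiableOn ℝ w (Set.Icc r t) := by
      intro x hx
      exact (hw x (lt_of_lt_of_le hr0 hx.1)
        (lt_of_le_of_lt hx.2 ht1)).differentiableAt.differentiableWithinAt
    have hderiv : ∀ x ∈ Set.Ico r t, derivWithin w (Set.Icc r t) x = 0 := by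
      intro x hx
      have hx1 : 0 < x := lt_of_lt_of_le hr0 hx.1
      have hx2 : x < 1 := lt_trans hx.2 ht1
      exact ((hw x hx1 hx2).hasDerivWithinAt).derivWithin
        ((uniqueDiffOn_Icc hrt') x (Set.mem_Icc.2 ⟨hx.1, le_of_lt hx.2⟩))
    exact constant_of_derivWithin_zero hdiff hderiv t (Set.mem_Icc.2 ⟨hrt, le_refl t⟩)
  set C : ℝ := ((1:ℝ)/2) ^ (1 - ((n + 2 : ℕ) : ℤ)) * ((σm (n + 2)) Set.univ).toReal with hCdef
  have hC0 : 0 ≤ C := by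
    rw [hCdef]
    apply mul_nonneg
    · positivity
    · exact ENNReal.toReal_nonneg
  have hsmall : ∀ r : ℝ, 0 < r → r ≤ t → r ≤ 1 / 2 → |w t| ≤ r * C := by
    intro r h1 h2 h3
    rw [hconst r h1 h2, hwdef]
    simp only
    rw [abs_mul, abs_pow]
    have hb := phiD_bound (m := n + 2) (by omega) i₀ (t := r) (by rw [abs_of_pos h1]; exact h3)
    calc |r| ^ (n + 1) * |phiD (n + 2) i₀ r| ≤ |r| ^ (n + 1) * C :=
        mul_le_mul_of_nonneg_left hb (by positivity)
      _ ≤ r * C := by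
        apply mul_le_mul_of_nonneg_right _ hC0
        rw [abs_of_pos h1]
        calc r ^ (n + 1) ≤ r ^ 1 :=
            pow_le_pow_of_le_one h1.le (by linarith) (by omega)
          _ = r := pow_one r
  have hwt : w t = 0 := by
    by_contra hne
    have hpos : 0 < |w t| := abs_pos.2 hne
    set r : ℝ := min (min t (1 / 2)) (|w t| / (2 * (C + 1))) with hrdef
    have hr0 : 0 < r := by
      apply lt_min (lt_min ht0 (by norm_num))
      positivity
    have h1 := hsmall r hr0 (le_trans (min_le_left _ _) (min_le_left _ _))
      (le_trans (min_le_left _ _) (min_le_right _ _))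
    have h2 : r * C ≤ (|w t| / (2 * (C + 1))) * (C + 1) := by
      apply mul_le_mul (min_le_right _ _) (by linarith) hC0 (by positivity)
    have h3 : (|w t| / (2 * (C + 1))) * (C + 1) = |w t| / 2 := by
      field_simp
    rw [h3] at h2
    linarith [h1.trans h2]
  have hfinal : t ^ (n + 1) * phiD (n + 2) i₀ t = 0 := hwt
  rcases mul_eq_zero.1 hfinal with h | h
  · exact absurd h (by positivity)
  · exact h

include hR₁ ha in
lemma Hf_const (hm : 2 ≤ m) (Z : EuclideanSpace ℝ (Fin m)) (hZ : ‖Z‖ < 1) :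
    Hf a m Z = Hf a m 0 := by
  have h0m : 0 < m := by omega
  set i₀ : Fin m := ⟨0, h0m⟩ with hi₀
  set v₁ : EuclideanSpace ℝ (Fin m) := EuclideanSpace.single i₀ (1:ℝ) with hv₁
  have h1 : Hf a m Z = Hf a m (‖Z‖ • v₁) := H_radial hR₁ ha Z hZ v₁ (norm_single_one i₀)
  rcases eq_or_lt_of_le (norm_nonneg Z) with h0 | h0
  · rw [h1, ← h0, zero_smul]
  set τ : ℝ := ‖Z‖ with hτ
  have hphi : ∀ x ∈ Set.Icc (0:ℝ) τ, HasDerivAt (fun r => Hf a m (r • v₁)) (phiD m i₀ x) x := by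
    intro x hx
    exact phi_deriv hR₁ ha (by omega) i₀
      (by rw [abs_of_nonneg hx.1]; exact lt_of_le_of_lt hx.2 hZ)
  have hdiff : DifferentiableOn ℝ (fun r => Hf a m (r • v₁)) (Set.Icc 0 τ) :=
    fun x hx => (hphi x hx).differentiableAt.differentiableWithinAt
  have hderiv : ∀ x ∈ Set.Ico (0:ℝ) τ,
      derivWithin (fun r => Hf a m (r • v₁)) (Set.Icc 0 τ) x = 0 := by
    intro x hx
    have hval : phiD m i₀ x = 0 := by
      rcases eq_or_lt_of_le hx.1 with h | h
      · rw [← h]; exact phiD_zero_at_zero i₀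
      · exact phiD_eq_zero hR₁ ha hm i₀ h (lt_trans hx.2 hZ)
    have hdw := ((hphi x (Set.mem_Icc.2 ⟨hx.1, hx.2.le⟩)).hasDerivWithinAt).derivWithin
      ((uniqueDiffOn_Icc h0) x (Set.mem_Icc.2 ⟨hx.1, hx.2.le⟩))
    rw [hdw, hval]
  have hconst := constant_of_derivWithin_zero hdiff hderiv τ
    (Set.mem_Icc.2 ⟨norm_nonneg Z, le_refl τ⟩)
  rw [h1]
  simpa [zero_smul] using hconst

end Core

end

end Stmt6

open MeasureTheory Metric intervalIntegral

/-- **The boundary L² term is minimized at the center.**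
For `m ≥ 2`, `R₁ > 0`, `a(r) = ∫_{R₁}^{r} t^{1−m} dt`, and
`F(X) = ∫_{P ∈ S^{m−1}} a(‖P − X‖)² dσ(P)`, one has `F(0) ≤ F(X)` for every `X` with
`‖X‖ + R₁ < 1`, with equality iff `X = 0`. -/
theorem stmt6 (m : ℕ) (hm : 2 ≤ m) (R₁ : ℝ) (hR₁ : 0 < R₁)
    (a : ℝ → ℝ) (ha : ∀ r : ℝ, a r = ∫ t in R₁..r, t ^ (1 - (m : ℤ)))
    (F : EuclideanSpace ℝ (Fin m) → ℝ)
    (hF : ∀ X : EuclideanSpace ℝ (Fin m),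
      F X = ∫ P : sphere (0 : EuclideanSpace ℝ (Fin m)) 1,
          (a ‖(P : EuclideanSpace ℝ (Fin m)) - X‖) ^ 2
        ∂((volume : Measure (EuclideanSpace ℝ (Fin m))).toSphere))
    (X : EuclideanSpace ℝ (Fin m)) (hX : ‖X‖ + R₁ < 1) :
    F 0 ≤ F X ∧ (F 0 = F X ↔ X = 0) := by
  have hmeas : (volume : Measure (EuclideanSpace ℝ (Fin m))).toSphere = Stmt6.σm m := rfl
  have hX1 : ‖X‖ < 1 := by linarith
  set S : ℝ := ((Stmt6.σm m) Set.univ).toReal with hS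
  have hnorm1 : ∀ P : sphere (0 : EuclideanSpace ℝ (Fin m)) 1,
      ‖(P : EuclideanSpace ℝ (Fin m)) - 0‖ = 1 := by
    intro P
    rw [sub_zero]
    simpa [mem_sphere_zero_iff_norm] using P.2
  have hH0 : Stmt6.Hf a m 0 = a 1 * S := by
    unfold Stmt6.Hf
    have h1 : ∀ P : sphere (0 : EuclideanSpace ℝ (Fin m)) 1,
        a ‖(P : EuclideanSpace ℝ (Fin m)) - 0‖ = a 1 := fun P => by rw [hnorm1 P]
    rw [integral_congr_ae (Filter.Eventually.of_forall h1), MeasureTheory.integral_const]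
    simp [hS, smul_eq_mul, mul_comm, Measure.real]
  have hHX : Stmt6.Hf a m X = a 1 * S := by
    rw [Stmt6.Hf_const hR₁ ha hm X hX1, hH0]
  set g : sphere (0 : EuclideanSpace ℝ (Fin m)) 1 → ℝ :=
    fun P => a ‖(P : EuclideanSpace ℝ (Fin m)) - X‖ with hgdef
  have hgcont : Continuous g := Stmt6.cont_integrand hR₁ ha hX1
  have hgint : Integrable g (Stmt6.σm m) := Stmt6.integrable_integrand hR₁ ha hX1
  have hg1int : Integrable (fun P => (g P - a 1) ^ 2) (Stmt6.σm m) :=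
    Stmt6.integrable_of_continuous _ ((hgcont.sub continuous_const).pow 2)
  have hFX : F X = (∫ P, (g P - a 1) ^ 2 ∂(Stmt6.σm m))
      + (2 * a 1) * (Stmt6.Hf a m X) - (a 1) ^ 2 * S := by
    rw [hF X, hmeas]
    have hpt : ∀ P : sphere (0 : EuclideanSpace ℝ (Fin m)) 1,
        (a ‖(P : EuclideanSpace ℝ (Fin m)) - X‖) ^ 2
          = (g P - a 1) ^ 2 + (2 * a 1 * g P - (a 1) ^ 2) := fun P => by
      rw [hgdef]; ring
    rw [integral_congr_ae (Filter.Eventually.of_forall hpt)]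
    have hadd : ∫ P : sphere (0 : EuclideanSpace ℝ (Fin m)) 1,
        ((g P - a 1) ^ 2 + (2 * a 1 * g P - (a 1) ^ 2)) ∂(Stmt6.σm m)
        = (∫ P, (g P - a 1) ^ 2 ∂(Stmt6.σm m))
          + ∫ P, (2 * a 1 * g P - (a 1) ^ 2) ∂(Stmt6.σm m) :=
      MeasureTheory.integral_add hg1int ((hgint.const_mul _).sub (integrable_const _))
    have hsub : ∫ P : sphere (0 : EuclideanSpace ℝ (Fin m)) 1,
        (2 * a 1 * g P - (a 1) ^ 2) ∂(Stmt6.σm m)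
        = (∫ P, 2 * a 1 * g P ∂(Stmt6.σm m)) - ∫ _P, (a 1) ^ 2 ∂(Stmt6.σm m) :=
      MeasureTheory.integral_sub (hgint.const_mul _) (integrable_const _)
    have hcm : ∫ P : sphere (0 : EuclideanSpace ℝ (Fin m)) 1,
        2 * a 1 * g P ∂(Stmt6.σm m) = 2 * a 1 * ∫ P, g P ∂(Stmt6.σm m) :=
      MeasureTheory.integral_const_mul _ _
    have hHf : Stmt6.Hf a m X = ∫ P, g P ∂(Stmt6.σm m) := rfl
    rw [hadd, hsub, hcm, MeasureTheory.integral_const, ← hHf]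
    simp [hS, smul_eq_mul, Measure.real]
    ring
  have hF0 : F 0 = (a 1) ^ 2 * S := by
    rw [hF 0, hmeas]
    have h1 : ∀ P : sphere (0 : EuclideanSpace ℝ (Fin m)) 1,
        (a ‖(P : EuclideanSpace ℝ (Fin m)) - 0‖) ^ 2 = (a 1) ^ 2 := fun P => by rw [hnorm1 P]
    rw [integral_congr_ae (Filter.Eventually.of_forall h1), MeasureTheory.integral_const]
    simp [hS, smul_eq_mul, mul_comm, Measure.real]
  have hdiff : F X - F 0 = ∫ P, (g P - a 1) ^ 2 ∂(Stmt6.σm m) := by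
    rw [hFX, hF0, hHX]; ring
  have hI2 : 0 ≤ ∫ P, (g P - a 1) ^ 2 ∂(Stmt6.σm m) :=
    integral_nonneg fun P => sq_nonneg _
  refine ⟨by linarith, ?_, ?_⟩
  · intro heq
    by_contra hXne
    have hI20 : ∫ P, (g P - a 1) ^ 2 ∂(Stmt6.σm m) = 0 := by linarith
    have hae := (integral_eq_zero_iff_of_nonneg (fun P => sq_nonneg (g P - a 1)) hg1int).1 hI20
    have hnull : (Stmt6.σm m) {P | (g P - a 1) ^ 2 ≠ 0} = 0 := by
      rw [Filter.EventuallyEq, ae_iff] at hae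
      simpa using hae
    set U : Set (sphere (0 : EuclideanSpace ℝ (Fin m)) 1) :=
      {P | ⟪(P : EuclideanSpace ℝ (Fin m)), X⟫ < 0} with hUdef
    have hUopen : IsOpen U :=
      isOpen_lt (continuous_subtype_val.inner continuous_const) continuous_const
    have hX0 : 0 < ‖X‖ := norm_pos_iff.2 hXne
    have hUne : U.Nonempty := by
      refine ⟨⟨(-‖X‖⁻¹) • X, ?_⟩, ?_⟩
      · rw [mem_sphere_zero_iff_norm, norm_smul, Real.norm_eq_abs, abs_neg,
          abs_of_pos (inv_pos.2 hX0), inv_mul_cancel₀ (ne_of_gt hX0)]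
      · show ⟪(-‖X‖⁻¹) • X, X⟫ < 0
        rw [real_inner_smul_left, real_inner_self_eq_norm_sq]
        have h2 : 0 < ‖X‖ ^ 2 := by positivity
        nlinarith [inv_pos.2 hX0]
    have hUpos := Stmt6.sigma_pos_of_isOpen (m := m) (by omega) hUopen hUne
    have hsub : U ⊆ {P | (g P - a 1) ^ 2 ≠ 0} := by
      intro P hP
      have hPn : ‖(P : EuclideanSpace ℝ (Fin m))‖ = 1 := by
        simpa [mem_sphere_zero_iff_norm] using P.2
      have hPin : ⟪(P : EuclideanSpace ℝ (Fin m)), X⟫ < 0 := hP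
      have hgt : 1 < ‖(P : EuclideanSpace ℝ (Fin m)) - X‖ := by
        have h2 : ‖(P : EuclideanSpace ℝ (Fin m)) - X‖ ^ 2
            = 1 - 2 * ⟪(P : EuclideanSpace ℝ (Fin m)), X⟫ + ‖X‖ ^ 2 := by
          rw [norm_sub_sq_real, hPn]; ring
        nlinarith [norm_nonneg ((P : EuclideanSpace ℝ (Fin m)) - X), sq_nonneg ‖X‖]
      have hlt := Stmt6.a_lt hR₁ ha hgt
      simp only [Set.mem_setOf_eq]
      intro h0
      have h1 : g P - a 1 = 0 := by
        have := pow_eq_zero_iff (n := 2) (by norm_num) |>.1 h0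
        exact this
      rw [hgdef] at h1
      simp only at h1
      linarith
    exact absurd (measure_mono_null hsub hnull) (ne_of_gt hUpos)
  · intro h
    rw [h]
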